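/- Let p be an odd prime with p-1 = 2^s·q, q odd, and ζ a primitive 2^{s-1}-th root of unity in F_p. Let S_k = {a ∈ squares of F_p^× : a^q = ζ^k}. If f ∈ F_p[X] is nonconstant and satisfies f(a)^2 = a for all a ∈ S_k, then deg f ≥ (q+1)/2. -/

import Mathlib

open Polynomial

/-- With `p - 1 = 2^s q` (`q` odd), `ζ` a primitive `2^(s-1)`-th root of unity,
any nonconstant `f` computing square roots on `S_k = {a square : a^q = ζ^k}`
has degree at least `(q+1)/2`. -/
theorem stmt_6 (p s q : ℕ) [Fact p.Prime] (hp : p ≠ 2)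
    (hpq : p - 1 = 2 ^ s * q) (hq : Odd q)
    (ζ : ZMod p) (hζ : IsPrimitiveRoot ζ (2 ^ (s - 1))) (k : ℕ)
    (f : Polynomial (ZMod p)) (hnc : 0 < f.natDegree)
    (hf : ∀ a : ZMod p, a ≠ 0 → IsSquare a → a ^ q = ζ ^ k →
      (f.eval a) ^ 2 = a) :
    (q + 1) / 2 ≤ f.natDegree := by
  have hprime := (Fact.out : p.Prime)
  have hp2 : 2 < p := lt_of_le_of_ne hprime.two_le (Ne.symm hp)
  have hpodd : Odd p := hprime.odd_of_ne_two hp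
  -- s ≥ 1
  have hs : 1 ≤ s := by
    by_contra h
    have hs0 : s = 0 := by omega
    obtain ⟨m, hm⟩ := hq
    obtain ⟨t, ht⟩ := hpodd
    rw [hs0] at hpq
    omega
  have hq0 : q ≠ 0 := by rintro rfl; simp [Nat.odd_iff] at hq
  -- ζ ≠ 0
  have hζ1 : ζ ^ (2 ^ (s - 1)) = 1 := hζ.pow_eq_one
  have hζ0 : ζ ≠ 0 := by
    rintro rfl
    rw [zero_pow (by positivity)] at hζ1
    exact zero_ne_one hζ1
  set c : ZMod p := ζ ^ k with hc
  have hc0 : c ≠ 0 := pow_ne_zero _ hζ0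
  have hc1 : c ^ (2 ^ (s - 1)) = 1 := by
    rw [hc, ← pow_mul, mul_comm, pow_mul, hζ1, one_pow]
  -- b with b ^ q = c
  have hcop : q.Coprime (orderOf c) :=
    (Nat.Coprime.pow_right _ (Nat.coprime_two_right.mpr hq)).coprime_dvd_right
      (orderOf_dvd_of_pow_eq_one hc1)
  obtain ⟨m, hb⟩ := exists_pow_eq_self_of_coprime hcop
  set b : ZMod p := c ^ m with hbdef
  have hbq : b ^ q = c := by rw [hbdef, ← pow_mul, mul_comm, pow_mul]; exact hb
  have hb0 : b ≠ 0 := by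
    intro h
    rw [h, zero_pow hq0] at hbq
    exact hc0 hbq.symm
  -- a primitive q-th root of unity
  haveI : NeZero p := ⟨hprime.ne_zero⟩
  obtain ⟨g0, hg0⟩ := IsCyclic.exists_ofOrder_eq_natCard (α := (ZMod p)ˣ)
  have hcard : Nat.card (ZMod p)ˣ = p - 1 := by
    rw [Nat.card_eq_fintype_card, ZMod.card_units_eq_totient, Nat.totient_prime hprime]
  have hord : orderOf g0 = 2 ^ s * q := by rw [hg0, hcard, hpq]
  have hordη : orderOf (g0 ^ (2 ^ s)) = q := by
    rw [orderOf_pow_of_dvd (by positivity) (by rw [hord]; exact Dvd.intro q rfl), hord,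
      Nat.mul_div_cancel_left _ (by positivity)]
  have hη : IsPrimitiveRoot ((g0 ^ (2 ^ s) : (ZMod p)ˣ) : ZMod p) q := by
    rw [IsPrimitiveRoot.coe_units_iff, ← hordη]
    exact IsPrimitiveRoot.orderOf _
  -- the polynomial g = f^2 - X
  set g : Polynomial (ZMod p) := f ^ 2 - X with hg
  have hdegf2 : (f ^ 2).natDegree = 2 * f.natDegree := by
    rw [natDegree_pow]
  have hdegg : g.natDegree = 2 * f.natDegree := by
    rw [hg, natDegree_sub_eq_left_of_natDegree_lt, hdegf2]
    rw [hdegf2, natDegree_X]; omega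
  have hg0' : g ≠ 0 := by
    intro h
    rw [h, natDegree_zero] at hdegg
    omega
  -- the finset of roots
  set F : Finset (ZMod p) := (nthRootsFinset q (1 : ZMod p)).image (fun u => b * u) with hF
  have hFcard : F.card = q := by
    rw [hF, Finset.card_image_of_injective _ (mul_right_injective₀ hb0),
      hη.card_nthRootsFinset]
  have hFsub : F ⊆ g.roots.toFinset := by
    intro x hx
    rw [hF, Finset.mem_image] at hx
    obtain ⟨u, hu, rfl⟩ := hx
    have hu1 : u ^ q = 1 := (mem_nthRootsFinset (Nat.pos_of_ne_zero hq0) _).mp hu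
    have hxq : (b * u) ^ q = c := by rw [mul_pow, hbq, hu1, mul_one]
    have hx0 : b * u ≠ 0 := by
      intro h
      rw [h, zero_pow hq0] at hxq
      exact hc0 hxq.symm
    have hp2' : p / 2 = 2 ^ (s - 1) * q := by
      obtain ⟨t, ht⟩ := hpodd
      have h2s : 2 ^ s = 2 * 2 ^ (s - 1) := by
        conv_lhs => rw [show s = (s - 1) + 1 by omega]
        ring
      rw [h2s, mul_assoc] at hpq
      omega
    have hsq : IsSquare (b * u) := by
      rw [ZMod.euler_criterion p hx0, hp2', mul_comm (2 ^ (s-1)) q, pow_mul, hxq, hc1]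
    have := hf (b * u) hx0 hsq hxq
    rw [Multiset.mem_toFinset, mem_roots hg0']
    simp only [IsRoot, hg, eval_sub, eval_pow, eval_X]
    rw [this, sub_self]
  have : q ≤ g.natDegree := by
    calc q = F.card := hFcard.symm
      _ ≤ g.roots.toFinset.card := Finset.card_le_card hFsub
      _ ≤ Multiset.card g.roots := g.roots.toFinset_card_le
      _ ≤ g.natDegree := g.card_roots'
  rw [hdegg] at this
  obtain ⟨m', hm'⟩ := hq
  omega
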